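/- Let A_1, A_2, A_3 be finite idempotent algebras of the same signature, let a_i, b_i ∈ A_i, and for i = 2,3 let θ_i be a congruence of Sg{a_i,b_i} in A_i such that b_i ∈ Sg{a_i, c} for every c ∈ b_i^{θ_i}. Let g be a ternary term of the common signature such that g^{A_1}(a_1,b_1,b_1) = b_1, g^{A_2}(b_2,a_2,b_2) θ_2 b_2, and g^{A_3}(b_3,b_3,a_3) θ_3 b_3. Then there exists a ternary term g′ such that g′^{A_1}(a_1,b_1,b_1) = b_1, g′^{A_2}(b_2,a_2,b_2) = b_2, and g′^{A_3}(b_3,b_3,a_3) = b_3. -/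
import Mathlib


namespace UA

/-- Terms over a signature `(ι, ar)` with `n` variables. -/
inductive Term (ι : Type) (ar : ι → ℕ) (n : ℕ) : Type where
  | var : Fin n → Term ι ar n
  | app : (i : ι) → (Fin (ar i) → Term ι ar n) → Term ι ar n

/-- Evaluation of a term in an algebra with operations `ops`. -/
def Term.eval {ι : Type} {ar : ι → ℕ} {A : Type} (ops : ∀ i : ι, (Fin (ar i) → A) → A)
    {n : ℕ} : Term ι ar n → (Fin n → A) → A
  | .var j, x => x j
  | .app i ts, x => ops i fun k => Term.eval ops (ts k) x

variable {ι : Type} {ar : ι → ℕ} {A : Type}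

/-- An algebra is idempotent if every basic operation is. -/
def Idempotent (ops : ∀ i : ι, (Fin (ar i) → A) → A) : Prop :=
  ∀ (i : ι) (x : A), ops i (fun _ => x) = x

/-- A subuniverse: a subset closed under all basic operations. -/
def IsSubuniverse (ops : ∀ i : ι, (Fin (ar i) → A) → A) (S : Set A) : Prop :=
  ∀ (i : ι) (xs : Fin (ar i) → A), (∀ k, xs k ∈ S) → ops i xs ∈ S

/-- The subuniverse generated by `X`. -/
def Sg (ops : ∀ i : ι, (Fin (ar i) → A) → A) (X : Set A) : Set A :=
  ⋂₀ {S | IsSubuniverse ops S ∧ X ⊆ S}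

/-- A tolerance: a reflexive symmetric compatible binary relation. -/
def IsTolerance (ops : ∀ i : ι, (Fin (ar i) → A) → A) (τ : A → A → Prop) : Prop :=
  (∀ x, τ x x) ∧ (∀ x y, τ x y → τ y x) ∧
  ∀ (i : ι) (xs ys : Fin (ar i) → A), (∀ k, τ (xs k) (ys k)) → τ (ops i xs) (ops i ys)

/-- A congruence: a compatible equivalence relation. -/
def IsCongruence (ops : ∀ i : ι, (Fin (ar i) → A) → A) (θ : A → A → Prop) : Prop :=
  Equivalence θ ∧
  ∀ (i : ι) (xs ys : Fin (ar i) → A), (∀ k, θ (xs k) (ys k)) → θ (ops i xs) (ops i ys)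

/-- A congruence of the subalgebra with universe `B`, viewed as a partial
equivalence relation on the big algebra whose domain is exactly `B` and which is
compatible with all operations. -/
def IsCongruenceOn (ops : ∀ i : ι, (Fin (ar i) → A) → A) (B : Set A)
    (θ : A → A → Prop) : Prop :=
  (∀ x y, θ x y → x ∈ B ∧ y ∈ B) ∧
  (∀ x ∈ B, θ x x) ∧
  (∀ x y, θ x y → θ y x) ∧
  (∀ x y z, θ x y → θ y z → θ x z) ∧
  ∀ (i : ι) (xs ys : Fin (ar i) → A), (∀ k, θ (xs k) (ys k)) → θ (ops i xs) (ops i ys)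

/-- `f` is a binary term operation of the algebra. -/
def IsTermOp2 (ops : ∀ i : ι, (Fin (ar i) → A) → A) (f : A → A → A) : Prop :=
  ∃ t : Term ι ar 2, ∀ x y, f x y = t.eval ops ![x, y]

/-- `g` is a ternary term operation of the algebra. -/
def IsTermOp3 (ops : ∀ i : ι, (Fin (ar i) → A) → A) (g : A → A → A → A) : Prop :=
  ∃ t : Term ι ar 3, ∀ x y z, g x y z = t.eval ops ![x, y, z]

/-- Connectivity of `a` and `b` in the hypergraph `H(A)` whose hyperedges are the
nonempty proper subuniverses: a chain of hyperedges with consecutive ones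
intersecting, the first containing `a`, the last containing `b`. -/
def HConnected (ops : ∀ i : ι, (Fin (ar i) → A) → A) (a b : A) : Prop :=
  ∃ L : List (Set A),
    (∀ S ∈ L, IsSubuniverse ops S ∧ S.Nonempty ∧ S ≠ Set.univ) ∧
    L.Chain' (fun S T => (S ∩ T).Nonempty) ∧
    ∃ h : L ≠ [], a ∈ L.head h ∧ b ∈ L.getLast h


/-- Substitution of terms into a term. -/
def Term.subst {n m : ℕ} : Term ι ar n → (Fin n → Term ι ar m) → Term ι ar m
  | .var j, σ => σ j
  | .app i ts, σ => .app i fun k => (ts k).subst σ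

theorem Term.eval_subst (ops : ∀ i : ι, (Fin (ar i) → A) → A) {n m : ℕ}
    (t : Term ι ar n) (σ : Fin n → Term ι ar m) (x : Fin m → A) :
    (t.subst σ).eval ops x = t.eval ops (fun j => (σ j).eval ops x) := by
  induction t with
  | var j => rfl
  | app i ts ih =>
    show ops i _ = ops i _
    congr 1
    funext k
    exact ih k

theorem eval_subst2 (ops : ∀ i : ι, (Fin (ar i) → A) → A)
    (t : Term ι ar 2) (u v : Term ι ar 3) (x : Fin 3 → A) :
    (t.subst ![u, v]).eval ops x = t.eval ops ![u.eval ops x, v.eval ops x] := by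
  rw [Term.eval_subst]
  congr 1
  funext j
  fin_cases j <;> rfl

theorem eval_const (ops : ∀ i : ι, (Fin (ar i) → A) → A) (h : Idempotent ops)
    {n : ℕ} (t : Term ι ar n) (x : A) : t.eval ops (fun _ => x) = x := by
  induction t with
  | var j => rfl
  | app i ts ih =>
    show ops i (fun k => (ts k).eval ops fun _ => x) = x
    have : (fun k => (ts k).eval ops fun _ => x) = fun _ => x := funext ih
    rw [this]; exact h i x

theorem eval_const2 (ops : ∀ i : ι, (Fin (ar i) → A) → A) (h : Idempotent ops)
    (t : Term ι ar 2) (x : A) : t.eval ops ![x, x] = x := by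
  have : (![x, x] : Fin 2 → A) = fun _ => x := by funext j; fin_cases j <;> rfl
  rw [this]; exact eval_const ops h t x

theorem eval_congOn (ops : ∀ i : ι, (Fin (ar i) → A) → A) {B : Set A}
    {θ : A → A → Prop} (hθ : IsCongruenceOn ops B θ) {n : ℕ} (t : Term ι ar n)
    (xs ys : Fin n → A) (h : ∀ j, θ (xs j) (ys j)) :
    θ (t.eval ops xs) (t.eval ops ys) := by
  induction t with
  | var j => exact h j
  | app i ts ih => exact hθ.2.2.2.2 i _ _ fun k => ih k

theorem mem_Sg (ops : ∀ i : ι, (Fin (ar i) → A) → A) {X : Set A} {x : A}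
    (hx : x ∈ X) : x ∈ Sg ops X :=
  fun _ hS => hS.2 hx

theorem Sg_term (ops : ∀ i : ι, (Fin (ar i) → A) → A) (a c b : A)
    (hb : b ∈ Sg ops ({a, c} : Set A)) :
    ∃ t : Term ι ar 2, t.eval ops ![a, c] = b := by
  have : b ∈ {y | ∃ t : Term ι ar 2, t.eval ops ![a, c] = y} := by
    apply hb
    constructor
    · intro i xs hxs
      choose ts hts using hxs
      exact ⟨.app i ts, by
        show ops i _ = ops i _
        congr 1
        funext k
        exact hts k⟩
    · intro y hy
      rcases hy with rfl | rfl
      · exact ⟨.var 0, rfl⟩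
      · exact ⟨.var 1, rfl⟩
  exact this

/-- interpolation of majority-style behaviour of a term across
three similar algebras (Lemma on thin majority triples). -/
theorem stmt_14 {ι : Type} {ar : ι → ℕ} {A1 A2 A3 : Type}
    [Fintype A1] [Nonempty A1] [Fintype A2] [Nonempty A2] [Fintype A3] [Nonempty A3]
    (ops1 : ∀ i : ι, (Fin (ar i) → A1) → A1)
    (ops2 : ∀ i : ι, (Fin (ar i) → A2) → A2)
    (ops3 : ∀ i : ι, (Fin (ar i) → A3) → A3)
    (hid1 : Idempotent ops1) (hid2 : Idempotent ops2) (hid3 : Idempotent ops3)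
    (a1 b1 : A1) (a2 b2 : A2) (a3 b3 : A3)
    (θ2 : A2 → A2 → Prop)
    (hθ2 : IsCongruenceOn ops2 (Sg ops2 ({a2, b2} : Set A2)) θ2)
    (hgen2 : ∀ c, θ2 b2 c → b2 ∈ Sg ops2 ({a2, c} : Set A2))
    (θ3 : A3 → A3 → Prop)
    (hθ3 : IsCongruenceOn ops3 (Sg ops3 ({a3, b3} : Set A3)) θ3)
    (hgen3 : ∀ c, θ3 b3 c → b3 ∈ Sg ops3 ({a3, c} : Set A3))
    (g : Term ι ar 3)
    (hg1 : g.eval ops1 ![a1, b1, b1] = b1)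
    (hg2 : θ2 (g.eval ops2 ![b2, a2, b2]) b2)
    (hg3 : θ3 (g.eval ops3 ![b3, b3, a3]) b3) :
    ∃ g' : Term ι ar 3,
      g'.eval ops1 ![a1, b1, b1] = b1 ∧
      g'.eval ops2 ![b2, a2, b2] = b2 ∧
      g'.eval ops3 ![b3, b3, a3] = b3 := by
  have hb2Sg : b2 ∈ Sg ops2 ({a2, b2} : Set A2) := mem_Sg ops2 (by simp)
  have hb3Sg : b3 ∈ Sg ops3 ({a3, b3} : Set A3) := mem_Sg ops3 (by simp)
  -- Stage 1: fix coordinate 2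
  set c2 := g.eval ops2 ![b2, a2, b2] with hc2
  obtain ⟨t, ht⟩ := Sg_term ops2 a2 c2 b2 (hgen2 c2 (hθ2.2.2.1 _ _ hg2))
  set g1 : Term ι ar 3 := t.subst ![Term.var 1, g] with hg1def
  have h1A1 : g1.eval ops1 ![a1, b1, b1] = b1 := by
    rw [hg1def, eval_subst2]
    have hv : (Term.var 1 : Term ι ar 3).eval ops1 ![a1, b1, b1] = b1 := rfl
    rw [hv, hg1]
    exact eval_const2 ops1 hid1 t b1
  have h1A2 : g1.eval ops2 ![b2, a2, b2] = b2 := by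
    rw [hg1def, eval_subst2]
    have hv : (Term.var 1 : Term ι ar 3).eval ops2 ![b2, a2, b2] = a2 := rfl
    rw [hv, ← hc2, ht]
  have h1A3 : θ3 (g1.eval ops3 ![b3, b3, a3]) b3 := by
    rw [hg1def, eval_subst2]
    have hv : (Term.var 1 : Term ι ar 3).eval ops3 ![b3, b3, a3] = b3 := rfl
    rw [hv]
    have hstep : θ3 (t.eval ops3 ![b3, g.eval ops3 ![b3, b3, a3]])
        (t.eval ops3 ![b3, b3]) := by
      apply eval_congOn ops3 hθ3
      intro j
      fin_cases j
      · exact hθ3.2.1 b3 hb3Sg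
      · exact hg3
    rw [eval_const2 ops3 hid3 t b3] at hstep
    exact hstep
  -- Stage 2: fix coordinate 3
  set c3 := g1.eval ops3 ![b3, b3, a3] with hc3
  obtain ⟨s, hs⟩ := Sg_term ops3 a3 c3 b3 (hgen3 c3 (hθ3.2.2.1 _ _ h1A3))
  refine ⟨s.subst ![Term.var 2, g1], ?_, ?_, ?_⟩
  · rw [eval_subst2]
    have hv : (Term.var 2 : Term ι ar 3).eval ops1 ![a1, b1, b1] = b1 := rfl
    rw [hv, h1A1]
    exact eval_const2 ops1 hid1 s b1
  · rw [eval_subst2]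
    have hv : (Term.var 2 : Term ι ar 3).eval ops2 ![b2, a2, b2] = b2 := rfl
    rw [hv, h1A2]
    exact eval_const2 ops2 hid2 s b2
  · rw [eval_subst2]
    have hv : (Term.var 2 : Term ι ar 3).eval ops3 ![b3, b3, a3] = a3 := rfl
    rw [hv, ← hc3, hs]

end UA
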